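/- Fix γ > 0, an integer m ≥ 2, reals 0 = s₀ < s₁ < … < s_m = 1 and α₁ > α₂ > … > α_m = 0, and let u, N_m, D_m be as defined. Then the polynomial N_m(w) − D_m(w) has degree at most m (i.e., the coefficients of w^{m+1} in N_m and D_m coincide), and w = 0 is a root of N_m − D_m of multiplicity at least 2 (i.e., both the constant and the linear coefficients of N_m − D_m vanish). -/

import Mathlib

open MeasureTheory Filter Set Polynomial
open scoped Topology

/-- The global location for the piecewise-constant profile given by the data
`0 = s₀ < s₁ < … < s_m = 1`, `α₁ > … > α_m = 0`. -/
noncomputable def uPW (γ : ℝ) (m : ℕ) (s α : ℕ → ℝ) : ℝ :=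
  (1/γ) * Real.log ((Real.exp γ - 1) /
    ∑ j ∈ Finset.Icc 1 m,
      (Real.exp (γ*(s j - α j)) - Real.exp (γ*(s (j-1) - α j))))

/-- The polynomial `N_m(w) = (1 − w e^γ) ∏_{j=1}^m (1 − w e^{γ(u − α_j + s_{j−1})})`. -/
noncomputable def NmPoly (γ : ℝ) (m : ℕ) (s α : ℕ → ℝ) : Polynomial ℝ :=
  (1 - C (Real.exp γ) * X) *
    ∏ j ∈ Finset.Icc 1 m, (1 - C (Real.exp (γ*(uPW γ m s α - α j + s (j-1)))) * X)

/-- The polynomial `D_m(w) = (1 − w) ∏_{j=1}^m (1 − w e^{γ(u − α_j + s_j)})`. -/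
noncomputable def DmPoly (γ : ℝ) (m : ℕ) (s α : ℕ → ℝ) : Polynomial ℝ :=
  (1 - X) *
    ∏ j ∈ Finset.Icc 1 m, (1 - C (Real.exp (γ*(uPW γ m s α - α j + s j))) * X)

lemma factor_natDegree (a : ℝ) : (1 - C a * X : ℝ[X]).natDegree ≤ 1 := by
  compute_degree

lemma prod_natDegree_le (t : Finset ℕ) (c : ℕ → ℝ) :
    (∏ j ∈ t, (1 - C (c j) * X)).natDegree ≤ t.card := by
  have h1 : (∏ j ∈ t, (1 - C (c j) * X)).natDegree ≤ ∑ j ∈ t, (1 - C (c j) * X).natDegree :=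
    Polynomial.natDegree_prod_le t _
  have h2 : ∑ j ∈ t, (1 - C (c j) * X).natDegree ≤ ∑ _j ∈ t, 1 :=
    Finset.sum_le_sum fun j _ => factor_natDegree (c j)
  simpa using h1.trans h2

lemma mul_shift_coeff (b : ℝ) (P : ℝ[X]) (n : ℕ) :
    ((1 - C b * X) * P).coeff (n+1) = P.coeff (n+1) - b * P.coeff n := by
  rw [sub_mul, one_mul, Polynomial.coeff_sub, mul_assoc, Polynomial.coeff_C_mul,
    Polynomial.coeff_X_mul]

lemma prod_coeff_zero (t : Finset ℕ) (c : ℕ → ℝ) :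
    (∏ j ∈ t, (1 - C (c j) * X)).coeff 0 = 1 := by
  rw [Polynomial.coeff_zero_eq_eval_zero, Polynomial.eval_prod]
  simp

lemma prod_coeff_one (t : Finset ℕ) (c : ℕ → ℝ) :
    (∏ j ∈ t, (1 - C (c j) * X)).coeff 1 = -∑ j ∈ t, c j := by
  induction t using Finset.induction_on with
  | empty => simp [Polynomial.coeff_one]
  | insert _ _ ha ih =>
    rename_i a t
    rw [Finset.prod_insert ha, show (1:ℕ) = 0 + 1 from rfl, mul_shift_coeff,
      Finset.sum_insert ha, ih, prod_coeff_zero]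
    ring

lemma prod_coeff_card (t : Finset ℕ) (c : ℕ → ℝ) :
    (∏ j ∈ t, (1 - C (c j) * X)).coeff t.card = (-1)^t.card * ∏ j ∈ t, c j := by
  induction t using Finset.induction_on with
  | empty => simp [Polynomial.coeff_one]
  | insert _ _ ha ih =>
    rename_i a t
    rw [Finset.prod_insert ha, Finset.card_insert_of_notMem ha, mul_shift_coeff, ih,
      Polynomial.coeff_eq_zero_of_natDegree_lt
        (lt_of_le_of_lt (prod_natDegree_le t c) (Nat.lt_succ_self _)),
      Finset.prod_insert ha]
    ring

/-- `N_m − D_m` has degree at most `m` (the coefficients of `w^{m+1}` agree),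
and `w = 0` is a root of `N_m − D_m` of multiplicity at least `2` (the constant and linear
coefficients vanish). -/
theorem Nm_sub_Dm_degree_and_double_root_at_zero
    (γ : ℝ) (hγ : 0 < γ) (m : ℕ) (hm : 2 ≤ m) (s α : ℕ → ℝ)
    (hs0 : s 0 = 0) (hsm : s m = 1)
    (hs : ∀ j < m, s j < s (j+1))
    (hα : ∀ j, 1 ≤ j → j < m → α (j+1) < α j)
    (hαm : α m = 0) :
    (NmPoly γ m s α).coeff (m+1) = (DmPoly γ m s α).coeff (m+1) ∧
    (NmPoly γ m s α - DmPoly γ m s α).degree ≤ (m : ℕ) ∧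
    (NmPoly γ m s α - DmPoly γ m s α).coeff 0 = 0 ∧
    (NmPoly γ m s α - DmPoly γ m s α).coeff 1 = 0 := by
  set u := uPW γ m s α with hu
  set S := ∑ j ∈ Finset.Icc 1 m,
      (Real.exp (γ*(s j - α j)) - Real.exp (γ*(s (j-1) - α j))) with hS
  set cN : ℕ → ℝ := fun j => Real.exp (γ*(u - α j + s (j-1))) with hcN
  set cD : ℕ → ℝ := fun j => Real.exp (γ*(u - α j + s j)) with hcD
  have hmem : ∀ j ∈ Finset.Icc 1 m, s (j-1) < s j := by
    intro j hj
    rw [Finset.mem_Icc] at hj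
    have := hs (j-1) (by omega)
    rwa [show j - 1 + 1 = j by omega] at this
  have hSpos : 0 < S := by
    rw [hS]
    apply Finset.sum_pos
    · intro j hj
      have := hmem j hj
      have : γ * (s (j-1) - α j) < γ * (s j - α j) := by nlinarith
      linarith [Real.exp_lt_exp.mpr this]
    · exact ⟨1, Finset.mem_Icc.mpr ⟨le_refl 1, by omega⟩⟩
  have hE : (1:ℝ) < Real.exp γ := Real.one_lt_exp_iff.mpr hγ
  have hexpu : Real.exp (γ * u) = (Real.exp γ - 1) / S := by
    have hgu : γ * u = Real.log ((Real.exp γ - 1) / S) := by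
      rw [hu, uPW, ← hS]; field_simp
    rw [hgu, Real.exp_log (div_pos (by linarith) hSpos)]
  have hcard : (Finset.Icc 1 m).card = m := by
    rw [Nat.card_Icc]; omega
  -- telescoping
  have htel : ∑ j ∈ Finset.Icc 1 m, (s j - s (j-1)) = s m - s 0 := by
    rw [← Finset.Ico_add_one_right_eq_Icc, Finset.sum_Ico_eq_sum_range]
    have h1 : ∀ i ∈ Finset.range (m + 1 - 1), s (1+i) - s (1+i-1) = s (i+1) - s i := by
      intro i _
      congr 2 <;> omega
    rw [Finset.sum_congr rfl h1, show m + 1 - 1 = m by omega, Finset.sum_range_sub]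
  -- key equality 1 : top coefficient
  have key1 : Real.exp γ * ∏ j ∈ Finset.Icc 1 m, cN j = ∏ j ∈ Finset.Icc 1 m, cD j := by
    rw [hcN, hcD, ← Real.exp_sum, ← Real.exp_sum, ← Real.exp_add]
    congr 1
    have h2 : ∑ j ∈ Finset.Icc 1 m, γ * (u - α j + s j)
        = ∑ j ∈ Finset.Icc 1 m, γ * (u - α j + s (j-1))
          + γ * ∑ j ∈ Finset.Icc 1 m, (s j - s (j-1)) := by
      rw [Finset.mul_sum, ← Finset.sum_add_distrib]
      exact Finset.sum_congr rfl fun j _ => by ring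
    rw [h2, htel, hsm, hs0]
    ring
  -- key equality 2 : linear coefficient
  have key2 : Real.exp γ - 1
      = ∑ j ∈ Finset.Icc 1 m, cD j - ∑ j ∈ Finset.Icc 1 m, cN j := by
    have h3 : ∑ j ∈ Finset.Icc 1 m, cD j - ∑ j ∈ Finset.Icc 1 m, cN j
        = Real.exp (γ * u) * S := by
      rw [← Finset.sum_sub_distrib, hS, Finset.mul_sum]
      refine Finset.sum_congr rfl fun j _ => ?_
      rw [hcD, hcN]
      simp only
      rw [show γ * (u - α j + s j) = γ * u + γ * (s j - α j) by ring,
        show γ * (u - α j + s (j-1)) = γ * u + γ * (s (j-1) - α j) by ring,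
        Real.exp_add, Real.exp_add]
      ring
    rw [h3, hexpu, div_mul_cancel₀ _ hSpos.ne']
  -- coefficient computations
  have hPN := prod_coeff_card (Finset.Icc 1 m) cN
  have hPD := prod_coeff_card (Finset.Icc 1 m) cD
  rw [hcard] at hPN hPD
  have hDform : DmPoly γ m s α
      = (1 - C (1:ℝ) * X) * ∏ j ∈ Finset.Icc 1 m, (1 - C (cD j) * X) := by
    rw [DmPoly, ← hu, map_one, one_mul]
  have hNform : NmPoly γ m s α
      = (1 - C (Real.exp γ) * X) * ∏ j ∈ Finset.Icc 1 m, (1 - C (cN j) * X) := by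
    rw [NmPoly]
  have hPNtop : (∏ j ∈ Finset.Icc 1 m, (1 - C (cN j) * X)).coeff (m+1) = 0 :=
    Polynomial.coeff_eq_zero_of_natDegree_lt
      (lt_of_le_of_lt (by simpa [hcard] using prod_natDegree_le (Finset.Icc 1 m) cN)
        (Nat.lt_succ_self m))
  have hPDtop : (∏ j ∈ Finset.Icc 1 m, (1 - C (cD j) * X)).coeff (m+1) = 0 :=
    Polynomial.coeff_eq_zero_of_natDegree_lt
      (lt_of_le_of_lt (by simpa [hcard] using prod_natDegree_le (Finset.Icc 1 m) cD)
        (Nat.lt_succ_self m))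
  have htopN : (NmPoly γ m s α).coeff (m+1)
      = -(Real.exp γ * ((-1)^m * ∏ j ∈ Finset.Icc 1 m, cN j)) := by
    rw [hNform, mul_shift_coeff, hPNtop, hPN]; ring
  have htopD : (DmPoly γ m s α).coeff (m+1)
      = -(1 * ((-1)^m * ∏ j ∈ Finset.Icc 1 m, cD j)) := by
    rw [hDform, mul_shift_coeff, hPDtop, hPD]; ring
  have htop : (NmPoly γ m s α).coeff (m+1) = (DmPoly γ m s α).coeff (m+1) := by
    rw [htopN, htopD]
    have : Real.exp γ * ((-1)^m * ∏ j ∈ Finset.Icc 1 m, cN j)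
        = (-1)^m * (Real.exp γ * ∏ j ∈ Finset.Icc 1 m, cN j) := by ring
    rw [this, key1]; ring
  -- coeff 0
  have hc0 : (NmPoly γ m s α - DmPoly γ m s α).coeff 0 = 0 := by
    rw [Polynomial.coeff_sub, hNform, hDform, Polynomial.mul_coeff_zero,
      Polynomial.mul_coeff_zero, prod_coeff_zero, prod_coeff_zero]
    simp
  -- coeff 1
  have hc1 : (NmPoly γ m s α - DmPoly γ m s α).coeff 1 = 0 := by
    rw [Polynomial.coeff_sub, hNform, hDform, show (1:ℕ) = 0 + 1 from rfl,
      mul_shift_coeff, mul_shift_coeff, prod_coeff_one, prod_coeff_one,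
      prod_coeff_zero, prod_coeff_zero]
    have := key2
    ring_nf
    linarith [key2]
  -- degree
  have hNdeg : (NmPoly γ m s α).natDegree ≤ m + 1 := by
    rw [hNform]
    refine (Polynomial.natDegree_mul_le).trans ?_
    have := prod_natDegree_le (Finset.Icc 1 m) cN
    rw [hcard] at this
    have h4 : (1 - C (Real.exp γ) * X : ℝ[X]).natDegree ≤ 1 := factor_natDegree _
    omega
  have hDdeg : (DmPoly γ m s α).natDegree ≤ m + 1 := by
    rw [hDform]
    refine (Polynomial.natDegree_mul_le).trans ?_
    have := prod_natDegree_le (Finset.Icc 1 m) cD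
    rw [hcard] at this
    have h4 : (1 - C (1:ℝ) * X : ℝ[X]).natDegree ≤ 1 := factor_natDegree _
    omega
  have hdeg : (NmPoly γ m s α - DmPoly γ m s α).degree ≤ (m : ℕ) := by
    refine (Polynomial.degree_le_iff_coeff_zero _ _).mpr fun k hk => ?_
    have hk' : m < k := by exact_mod_cast hk
    rw [Polynomial.coeff_sub]
    rcases eq_or_lt_of_le (Nat.succ_le_of_lt hk') with h | h
    · rw [← h, htop, sub_self]
    · rw [Polynomial.coeff_eq_zero_of_natDegree_lt (lt_of_le_of_lt hNdeg h),
        Polynomial.coeff_eq_zero_of_natDegree_lt (lt_of_le_of_lt hDdeg h), sub_self]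
  exact ⟨htop, hdeg, hc0, hc1⟩
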